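/- Let m ≥ 0 and n ≥ 0, let ε_2, …, ε_{m+2} ∈ {0,1}, and suppose ε_i = 1 exactly for the indices i_1 < i_2 < ⋯ < i_k among {2, …, m+1} (with k ≥ 0), and ε_i = 0 for all other i with 2 ≤ i ≤ m+1. If either (n ≡ 2^{m+1} (mod 2^{m+2}) and k is odd) or (n ≡ 0 (mod 2^{m+2}) and k is even), then: (a) P_{m,0}^{ε_2,…,ε_{m+2}}(n) is empty unless ε_{m+2} = 0, i.e., P_{m,0}^{ε_2,…,ε_{m+1},ε_{m+2}}(n) = P_{m,0}^{ε_2,…,ε_{m+1},0}(n); and (b) the composite σ ∘ τ_{i_1} ∘ τ_{i_2} ∘ ⋯ ∘ τ_{i_k} is a bijection from P_{m,0}^{ε_2,…,ε_{m+2}}(n) onto P_m((n − k·2^{m+1})/2). In particular |P_{m,0}^{ε_2,…,ε_{m+2}}(n)| = r_m((n − k·2^{m+1})/2). -/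

import Mathlib

/-- The integer partitioned by the binary partition `α`, where `α i` is the
number of parts equal to `2 ^ i` (so `α i` is the `α_{i+1}` of the paper). -/
def binWeight (α : ℕ →₀ ℕ) : ℕ := α.sum fun i a => a * 2 ^ i

/-- `Pm m n` is the set of binary partitions of `n` satisfying the divisibility
conditions `2 ^ (m + 2 - i) ∣ α_i` for `1 ≤ i ≤ m + 1` (written here with the
index shifted down by one).  For `n < 0` the set is empty. -/
def Pm (m : ℕ) (n : ℤ) : Set (ℕ →₀ ℕ) :=
  {α | (binWeight α : ℤ) = n ∧ ∀ i ≤ m, 2 ^ (m + 1 - i) ∣ α i}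

/-- `r m n` is the number of binary partitions of `n` satisfying the divisibility
conditions `2 ^ (m + 2 - i) ∣ α_i` for `1 ≤ i ≤ m + 1`. -/
noncomputable def r (m : ℕ) (n : ℤ) : ℕ := Nat.card (Pm m n)

/-- `Pm0 m n ε` is the set `P_{m,0}^{ε₂,…,ε_{m+2}}(n)` of partitions in `Pm m n`
with `α₁ = 0` and `α_i ≡ ε_i · 2^(m+2-i) (mod 2^(m+3-i))` for `2 ≤ i ≤ m + 2`;
all indices (of both `α` and `ε`) are shifted down by one here, so the
congruences read `α i ≡ ε i · 2^(m+1-i) (mod 2^(m+2-i))` for `1 ≤ i ≤ m + 1`. -/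
def Pm0 (m : ℕ) (n : ℤ) (ε : ℕ → ℕ) : Set (ℕ →₀ ℕ) :=
  {α | α ∈ Pm m n ∧ α 0 = 0 ∧
    ∀ i, 1 ≤ i → i ≤ m + 1 → α i ≡ ε i * 2 ^ (m + 1 - i) [MOD 2 ^ (m + 2 - i)]}

/-- The map `σ` sending `(α₁, α₂, α₃, …)` to `(α₂, α₃, …)`. -/
noncomputable def sigmaShift (α : ℕ →₀ ℕ) : ℕ →₀ ℕ :=
  Finsupp.comapDomain Nat.succ α (Nat.succ_injective.injOn)

def succEmb : ℕ ↪ ℕ := ⟨Nat.succ, Nat.succ_injective⟩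

noncomputable def bwHom : (ℕ →₀ ℕ) →+ ℕ := Finsupp.liftAddHom (fun i => AddMonoidHom.mulRight (2 ^ i))

lemma bwHom_eq (α : ℕ →₀ ℕ) : bwHom α = binWeight α := rfl

lemma binWeight_single (j c : ℕ) : binWeight (Finsupp.single j c) = c * 2 ^ j := by
  rw [← bwHom_eq, bwHom, Finsupp.liftAddHom_apply_single]; rfl

lemma sigmaShift_apply (α : ℕ →₀ ℕ) (i : ℕ) : sigmaShift α i = α (i + 1) := rfl

lemma embDomain_succ_apply_succ (γ : ℕ →₀ ℕ) (i : ℕ) :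
    Finsupp.embDomain succEmb γ (i + 1) = γ i := Finsupp.embDomain_apply_self succEmb γ i

lemma embDomain_succ_apply_zero (γ : ℕ →₀ ℕ) : Finsupp.embDomain succEmb γ 0 = 0 := by
  apply Finsupp.embDomain_notin_range
  rintro ⟨a, ha⟩
  exact Nat.succ_ne_zero a ha

lemma sigmaShift_embDomain (γ : ℕ →₀ ℕ) : sigmaShift (Finsupp.embDomain succEmb γ) = γ := by
  ext i; rw [sigmaShift_apply, embDomain_succ_apply_succ]

lemma embDomain_sigmaShift {α : ℕ →₀ ℕ} (h0 : α 0 = 0) :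
    Finsupp.embDomain succEmb (sigmaShift α) = α := by
  ext i
  cases i with
  | zero => rw [embDomain_succ_apply_zero, h0]
  | succ j => rw [embDomain_succ_apply_succ, sigmaShift_apply]

lemma binWeight_embDomain (γ : ℕ →₀ ℕ) :
    binWeight (Finsupp.embDomain succEmb γ) = 2 * binWeight γ := by
  simp only [binWeight, Finsupp.sum_embDomain]
  rw [Finsupp.sum, Finsupp.sum, Finset.mul_sum]
  apply Finset.sum_congr rfl
  intro i _
  show γ i * 2 ^ (i + 1) = 2 * (γ i * 2 ^ i)
  ring

lemma sum_single_apply (S : Finset ℕ) (c : ℕ → ℕ) (i : ℕ) :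
    (∑ j ∈ S, Finsupp.single j (c j)) i = if i ∈ S then c i else 0 := by
  rw [Finsupp.finset_sum_apply]
  simp only [Finsupp.single_apply]
  exact Finset.sum_ite_eq' S i c

lemma le_of_modeq {a c M : ℕ} (h : a ≡ c [MOD M]) (hc : c < M) : c ≤ a := by
  rcases lt_or_ge a M with hA | hA
  · have h' := h
    unfold Nat.ModEq at h'
    rw [Nat.mod_eq_of_lt hA, Nat.mod_eq_of_lt hc] at h'
    omega
  · omega

lemma key_mod (m n : ℕ) (ε : ℕ → ℕ) (α : ℕ →₀ ℕ)
    (hw : binWeight α = n) (h0 : α 0 = 0)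
    (hcong : ∀ i, 1 ≤ i → i ≤ m + 1 → α i ≡ ε i * 2 ^ (m + 1 - i) [MOD 2 ^ (m + 2 - i)]) :
    n ≡ (∑ i ∈ Finset.Icc 1 (m+1), ε i) * 2 ^ (m+1) [MOD 2 ^ (m+2)] := by
  apply (ZMod.natCast_eq_natCast_iff _ _ _).mp
  set N := 2 ^ (m + 2) with hN
  have hT1 : ((n : ℕ) : ZMod N) = ∑ i ∈ α.support ∪ Finset.Icc 1 (m+1), ((α i * 2 ^ i : ℕ) : ZMod N) := by
    rw [← hw, binWeight, Finsupp.sum, Nat.cast_sum]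
    exact Finset.sum_subset Finset.subset_union_left (fun i _ hi => by
      rw [Finsupp.notMem_support_iff.mp hi]; simp)
  have hT2 : ∀ i ∈ α.support ∪ Finset.Icc 1 (m+1), i ∉ Finset.Icc 1 (m+1) →
      ((α i * 2 ^ i : ℕ) : ZMod N) = 0 := by
    intro i _ hi
    rw [Finset.mem_Icc] at hi
    push_neg at hi
    rcases Nat.eq_zero_or_pos i with h | h
    · subst h; rw [h0]; simp
    · have h2 : m + 2 ≤ i := by omega
      rw [hN, ZMod.natCast_eq_zero_iff]
      exact Dvd.dvd.mul_left (pow_dvd_pow 2 h2) _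
  have hT3 : ∀ i ∈ Finset.Icc 1 (m+1),
      ((α i * 2 ^ i : ℕ) : ZMod N) = ((ε i * 2 ^ (m+1) : ℕ) : ZMod N) := by
    intro i hi
    rw [Finset.mem_Icc] at hi
    have hc := (hcong i hi.1 hi.2).mul_right' (2 ^ i)
    rw [mul_assoc, ← pow_add, ← pow_add] at hc
    have e1 : m + 2 - i + i = m + 2 := by omega
    have e2 : m + 1 - i + i = m + 1 := by omega
    rw [e1, e2] at hc
    exact (ZMod.natCast_eq_natCast_iff _ _ _).mpr hc
  calc ((n:ℕ) : ZMod N) = ∑ i ∈ Finset.Icc 1 (m+1), ((α i * 2 ^ i : ℕ) : ZMod N) := by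
        rw [hT1]; exact (Finset.sum_subset Finset.subset_union_right hT2).symm
    _ = ∑ i ∈ Finset.Icc 1 (m+1), ((ε i * 2 ^ (m+1) : ℕ) : ZMod N) := Finset.sum_congr rfl hT3
    _ = _ := by push_cast; rw [Finset.sum_mul]

/-- Lemma (odd/even case (2)): with the indices of `ε` shifted down by one (so
`ε j` here is the paper's `ε_{j+1}`), suppose `ε` takes values in `{0,1}` and
equals `1` on `{1, …, m}` exactly on the set `S` (the paper's `{i₁ < ⋯ < i_k}`),
with `k = |S|`.  If `n ≡ 2^(m+1) (mod 2^(m+2))` and `k` is odd, or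
`n ≡ 0 (mod 2^(m+2))` and `k` is even, then:
(a) `P_{m,0}^{ε}(n)` is empty unless `ε_{m+2} = 0`, and
(b) when `ε_{m+2} = 0`, the composite `σ ∘ τ_{i₁} ∘ ⋯ ∘ τ_{i_k}` (which
subtracts `2^(m+1-j)` from the entry at each `j ∈ S` and then shifts) is a
bijection from `P_{m,0}^{ε}(n)` onto `P_m((n - k·2^(m+1))/2)`; in particular
`|P_{m,0}^{ε}(n)| = r_m((n - k·2^(m+1))/2)`. -/
theorem stmt10 (m n : ℕ) (ε : ℕ → ℕ)
    (hε : ∀ j, 1 ≤ j → j ≤ m + 1 → ε j = 0 ∨ ε j = 1)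
    (S : Finset ℕ) (hS : S ⊆ Finset.Icc 1 m)
    (hSε : ∀ j, 1 ≤ j → j ≤ m → (ε j = 1 ↔ j ∈ S))
    (k : ℕ) (hk : k = S.card)
    (h : (n % 2 ^ (m + 2) = 2 ^ (m + 1) ∧ Odd k) ∨
         (n % 2 ^ (m + 2) = 0 ∧ Even k)) :
    (ε (m + 1) = 1 → Pm0 m n ε = ∅) ∧
    (ε (m + 1) = 0 →
      Set.BijOn
        (fun α : ℕ →₀ ℕ => sigmaShift
          (α - ∑ j ∈ S, Finsupp.single j (2 ^ (m + 1 - j))))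
        (Pm0 m n ε) (Pm m (((n : ℤ) - k * 2 ^ (m + 1)) / 2)) ∧
      Nat.card (Pm0 m n ε) = r m (((n : ℤ) - k * 2 ^ (m + 1)) / 2)) := by
  -- elements of S are between 1 and m
  have hSmem : ∀ j ∈ S, 1 ≤ j ∧ j ≤ m := fun j hj => Finset.mem_Icc.mp (hS hj)
  -- sum of ε over Icc 1 m is k
  have hsumS : ∑ i ∈ Finset.Icc 1 m, ε i = k := by
    rw [hk]
    rw [show (∑ i ∈ Finset.Icc 1 m, ε i) = ∑ i ∈ Finset.Icc 1 m, (if i ∈ S then 1 else 0) from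
      Finset.sum_congr rfl (fun i hi => by
        rw [Finset.mem_Icc] at hi
        by_cases hiS : i ∈ S
        · simp [hiS, (hSε i hi.1 hi.2).mpr hiS]
        · simp only [hiS, if_false]
          rcases hε i hi.1 (by omega) with h0 | h1
          · exact h0
          · exact absurd ((hSε i hi.1 hi.2).mp h1) hiS)]
    rw [Finset.sum_ite_mem, Finset.inter_eq_right.mpr hS]
    simp
  -- the key congruence for members of Pm0
  have key : ∀ α ∈ Pm0 m n ε,
      n ≡ (k + ε (m+1)) * 2 ^ (m+1) [MOD 2 ^ (m+2)] := by
    intro α hα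
    obtain ⟨⟨hw, _⟩, h0, hcong⟩ := hα
    have hwn : binWeight α = n := by exact_mod_cast hw
    have := key_mod m n ε α hwn h0 hcong
    rwa [Finset.sum_Icc_succ_top (by omega : 1 ≤ m + 1), hsumS] at this
  constructor
  · -- part (a)
    intro hε1
    rw [Set.eq_empty_iff_forall_notMem]
    intro α hα
    have hkey := key α hα
    rw [hε1] at hkey
    have hmod : n % 2^(m+2) = ((k+1)*2^(m+1)) % 2^(m+2) := hkey  -- n % 2^(m+2) = ((k+1)*2^(m+1)) % 2^(m+2)
    have hp : 0 < 2 ^ (m+1) := Nat.pow_pos (by norm_num)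
    have hlt : 2 ^ (m+1) < 2 ^ (m+2) := Nat.pow_lt_pow_right (by norm_num) (by omega)
    rcases h with ⟨h1, hodd⟩ | ⟨h1, heven⟩
    · obtain ⟨j, hj⟩ := hodd
      have : (k + 1) * 2 ^ (m+1) = (j+1) * 2 ^ (m+2) := by
        rw [pow_succ]; subst hj; ring
      rw [h1, this, Nat.mul_mod_left] at hmod
      omega
    · obtain ⟨j, hj⟩ := heven
      have : (k + 1) * 2 ^ (m+1) = 2 ^ (m+1) + j * 2 ^ (m+2) := by
        rw [pow_succ]; subst hj; ring
      rw [h1, this, Nat.add_mul_mod_self_right, Nat.mod_eq_of_lt hlt] at hmod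
      omega
  · intro hε0
    set s : ℕ →₀ ℕ := ∑ j ∈ S, Finsupp.single j (2 ^ (m + 1 - j)) with hs_def
    have hs_apply : ∀ i, s i = if i ∈ S then 2 ^ (m + 1 - i) else 0 := fun i =>
      sum_single_apply S _ i
    have hεS : ∀ j ∈ S, ε j = 1 := fun j hj => (hSε j (hSmem j hj).1 (hSmem j hj).2).mpr hj
    have hε0' : ∀ i, 1 ≤ i → i ≤ m + 1 → i ∉ S → ε i = 0 := by
      intro i h1 h2 hiS
      rcases Nat.eq_or_lt_of_le h2 with he | hlt
      · rw [he]; exact hε0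
      · rcases hε i h1 h2 with h' | h'
        · exact h'
        · exact absurd ((hSε i h1 (by omega)).mp h') hiS
    have hs_eq : ∀ i, 1 ≤ i → i ≤ m + 1 → s i = ε i * 2 ^ (m + 1 - i) := by
      intro i h1 h2
      rw [hs_apply]
      by_cases hiS : i ∈ S
      · rw [if_pos hiS, hεS i hiS, one_mul]
      · rw [if_neg hiS, hε0' i h1 h2 hiS, zero_mul]
    have hs0 : s 0 = 0 := by
      have h0S : 0 ∉ S := fun hc => by have := (hSmem 0 hc).1; omega
      rw [hs_apply, if_neg h0S]
    have hbs : binWeight s = k * 2 ^ (m + 1) := by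
      rw [hs_def, ← bwHom_eq, map_sum]
      have hterm : ∀ j ∈ S, bwHom (Finsupp.single j (2 ^ (m + 1 - j))) = 2 ^ (m + 1) := by
        intro j hj
        rw [bwHom_eq, binWeight_single, ← pow_add]
        congr 1
        have := hSmem j hj; omega
      rw [Finset.sum_congr rfl hterm, Finset.sum_const, hk, smul_eq_mul]
    have hle : ∀ α ∈ Pm0 m n ε, ∀ i, s i ≤ α i := by
      intro α hα i
      obtain ⟨_, h0, hcong⟩ := hα
      rw [hs_apply]
      by_cases hiS : i ∈ S
      · rw [if_pos hiS]
        obtain ⟨h1, h2⟩ := hSmem i hiS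
        have hc := hcong i h1 (by omega)
        rw [hεS i hiS, one_mul] at hc
        exact le_of_modeq hc (Nat.pow_lt_pow_right (by norm_num) (by omega))
      · rw [if_neg hiS]; exact Nat.zero_le _
    have hmaps : Set.MapsTo (fun α : ℕ →₀ ℕ => sigmaShift (α - s)) (Pm0 m n ε)
        (Pm m (((n : ℤ) - k * 2 ^ (m + 1)) / 2)) := by
      intro α hα
      obtain ⟨⟨hw, hdvd⟩, h0, hcong⟩ := hα
      have hwn : binWeight α = n := by exact_mod_cast hw
      have hleα := hle α ⟨⟨hw, hdvd⟩, h0, hcong⟩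
      have hβ : ∀ i, (α - s) i = α i - s i := fun i => Finsupp.tsub_apply α s i
      have hβ0 : (α - s) 0 = 0 := by rw [hβ, h0, hs0]
      have hαβ : α = (α - s) + s := by
        ext i; rw [Finsupp.add_apply, hβ]; have := hleα i; omega
      have hwsplit : n = binWeight (α - s) + k * 2 ^ (m + 1) := by
        rw [← hwn, ← hbs]
        conv_lhs => rw [hαβ]
        rw [← bwHom_eq, map_add, bwHom_eq, bwHom_eq]
      have hdouble : binWeight (α - s) = 2 * binWeight (sigmaShift (α - s)) := by
        conv_lhs => rw [← embDomain_sigmaShift hβ0]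
        exact binWeight_embDomain _
      refine ⟨?_, ?_⟩
      · have hZ : (n : ℤ) - k * 2 ^ (m + 1) = 2 * (binWeight (sigmaShift (α - s)) : ℤ) := by
          rw [hwsplit, hdouble]; push_cast; ring
        rw [hZ, Int.mul_ediv_cancel_left _ (by norm_num)]
      · intro i hi
        show 2 ^ (m + 1 - i) ∣ sigmaShift (α - s) i
        rw [sigmaShift_apply, hβ]
        have hc := hcong (i + 1) (by omega) (by omega)
        have e1 : m + 1 - (i + 1) = m - i := by omega
        have e2 : m + 2 - (i + 1) = m + 1 - i := by omega
        rw [e1, e2] at hc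
        have hs1 : s (i + 1) = ε (i + 1) * 2 ^ (m - i) := by
          rw [hs_eq (i + 1) (by omega) (by omega), e1]
        rw [hs1]
        have hle2 : ε (i + 1) * 2 ^ (m - i) ≤ α (i + 1) := by
          rw [← hs1]; exact hleα (i + 1)
        exact (Nat.modEq_iff_dvd' hle2).mp hc.symm
    have hinj : Set.InjOn (fun α : ℕ →₀ ℕ => sigmaShift (α - s)) (Pm0 m n ε) := by
      intro α hα α' hα' heq
      have hleα := hle α hα
      have hleα' := hle α' hα'
      have h0 : α 0 = 0 := hα.2.1
      have h0' : α' 0 = 0 := hα'.2.1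
      ext i
      cases i with
      | zero => rw [h0, h0']
      | succ j =>
        have hj : sigmaShift (α - s) j = sigmaShift (α' - s) j := by
          exact DFunLike.congr_fun heq j
        rw [sigmaShift_apply, sigmaShift_apply, Finsupp.tsub_apply, Finsupp.tsub_apply] at hj
        have := hleα (j + 1); have := hleα' (j + 1); omega
    have h2dvd : (2 : ℤ) ∣ (n : ℤ) - k * 2 ^ (m + 1) := by
      have h2n : 2 ∣ n := by
        have h2m : (2 : ℕ) ∣ 2 ^ (m + 2) := dvd_pow_self 2 (by omega)
        have hmod2 : 2 ∣ n % 2 ^ (m + 2) := by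
          rcases h with ⟨h1, _⟩ | ⟨h1, _⟩ <;> rw [h1]
          · exact dvd_pow_self 2 (by omega)
          · exact dvd_zero 2
        exact (Nat.dvd_mod_iff h2m).mp hmod2
      have hn2 : (2 : ℤ) ∣ (n : ℤ) := by exact_mod_cast h2n
      exact dvd_sub hn2 (Dvd.dvd.mul_left (dvd_pow_self 2 (by omega)) _)
    have hdouble2 : 2 * (((n : ℤ) - k * 2 ^ (m + 1)) / 2) = (n : ℤ) - k * 2 ^ (m + 1) :=
      Int.mul_ediv_cancel' h2dvd
    have hsurj : Set.SurjOn (fun α : ℕ →₀ ℕ => sigmaShift (α - s)) (Pm0 m n ε)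
        (Pm m (((n : ℤ) - k * 2 ^ (m + 1)) / 2)) := by
      intro γ hγ
      obtain ⟨hwγ, hdvdγ⟩ := hγ
      refine ⟨Finsupp.embDomain succEmb γ + s, ⟨⟨?_, ?_⟩, ?_, ?_⟩, ?_⟩
      · have hbw : binWeight (Finsupp.embDomain succEmb γ + s)
            = 2 * binWeight γ + k * 2 ^ (m + 1) := by
          rw [← bwHom_eq, map_add, bwHom_eq, bwHom_eq, binWeight_embDomain, hbs]
        rw [hbw]
        push_cast
        rw [hwγ]
        linarith [hdouble2]
      · intro i hi
        rcases Nat.eq_zero_or_pos i with h0i | h0i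
        · subst h0i
          rw [Finsupp.add_apply, embDomain_succ_apply_zero, hs0]
          exact dvd_zero _
        · obtain ⟨j, rfl⟩ : ∃ j, i = j + 1 := ⟨i - 1, by omega⟩
          rw [Finsupp.add_apply, embDomain_succ_apply_succ]
          apply dvd_add
          · exact dvd_trans (pow_dvd_pow 2 (by omega : m + 1 - (j + 1) ≤ m + 1 - j))
              (hdvdγ j (by omega))
          · rw [hs_apply]
            by_cases hjS : j + 1 ∈ S
            · rw [if_pos hjS]
            · rw [if_neg hjS]; exact dvd_zero _
      · rw [Finsupp.add_apply, embDomain_succ_apply_zero, hs0]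
      · intro i h1 h2
        obtain ⟨j, rfl⟩ : ∃ j, i = j + 1 := ⟨i - 1, by omega⟩
        rw [Finsupp.add_apply, embDomain_succ_apply_succ, hs_eq (j + 1) h1 h2]
        have hMdvd : 2 ^ (m + 2 - (j + 1)) ∣ γ j := by
          have e : m + 2 - (j + 1) = m + 1 - j := by omega
          rw [e]; exact hdvdγ j (by omega)
        exact (Nat.ModEq.add_right _ ((Nat.modEq_zero_iff_dvd).mpr hMdvd)).trans
          (by rw [zero_add])
      · show sigmaShift ((Finsupp.embDomain succEmb γ + s) - s) = γ
        have hcanc : (Finsupp.embDomain succEmb γ + s) - s = Finsupp.embDomain succEmb γ := by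
          ext i; rw [Finsupp.tsub_apply, Finsupp.add_apply]; omega
        rw [hcanc, sigmaShift_embDomain]
    have hbij : Set.BijOn (fun α : ℕ →₀ ℕ => sigmaShift (α - s)) (Pm0 m n ε)
        (Pm m (((n : ℤ) - k * 2 ^ (m + 1)) / 2)) := ⟨hmaps, hinj, hsurj⟩
    exact ⟨hbij, Nat.card_congr (Set.BijOn.equiv _ hbij)⟩
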